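/- Let X be an A-correspondence, Y a B-correspondence, I ⊴ A, J ⊴ B closed ideals, R an A-B correspondence and S a B-A correspondence with X ≅ R ⊗_B S, S ⊗_A R ≅ Y, φ_R(I)R ⊆ RJ, and φ_S(J)S ⊆ SI. Then X_I ≅ R_J ⊗_{B/J} S_I and S_I ⊗_{A/I} R_J ≅ Y_J as correspondences over the quotient algebras. -/

import Mathlib

/-! Basic framework: C*-correspondences over (possibly non-unital) C*-algebras,
interior tensor products (characterized by their universal properties),
closed ideals, and unitary isomorphisms of correspondences. -/

noncomputable section

/-- A (non-degenerate) A–B C*-correspondence: a right Hilbert `B`-module `X`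
together with a left action of `A` by adjointable operators. -/
structure Corr (A B : Type) [NonUnitalCStarAlgebra A] [NonUnitalCStarAlgebra B] : Type 1 where
  X : Type
  [grp : NormedAddCommGroup X]
  [nsc : NormedSpace ℂ X]
  [cpl : CompleteSpace X]
  /-- the right action of `B` -/
  sm : X → B → X
  /-- the `B`-valued inner product (linear in the second variable) -/
  ip : X → X → B
  /-- the left action of `A` -/
  φ : A → X → X
  sm_add : ∀ x y b, sm (x + y) b = sm x b + sm y b
  sm_add' : ∀ x b c, sm x (b + c) = sm x b + sm x c
  sm_mul : ∀ x b c, sm (sm x b) c = sm x (b * c)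
  sm_smul : ∀ (t : ℂ) x b, sm (t • x) b = t • sm x b
  sm_smul' : ∀ (t : ℂ) x b, sm x (t • b) = t • sm x b
  ip_add : ∀ x y z, ip x (y + z) = ip x y + ip x z
  ip_smul : ∀ (t : ℂ) x y, ip x (t • y) = t • ip x y
  ip_sm : ∀ x y b, ip x (sm y b) = ip x y * b
  ip_star : ∀ x y, star (ip x y) = ip y x
  ip_pos : ∀ x, ∃ b, ip x x = star b * b
  ip_norm : ∀ x, ‖x‖ ^ 2 = ‖ip x x‖
  φ_add : ∀ a x y, φ a (x + y) = φ a x + φ a y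
  φ_add' : ∀ a b x, φ (a + b) x = φ a x + φ b x
  φ_smul : ∀ a (t : ℂ) x, φ a (t • x) = t • φ a x
  φ_smul' : ∀ (t : ℂ) a x, φ (t • a) x = t • φ a x
  φ_mul : ∀ a b x, φ (a * b) x = φ a (φ b x)
  φ_adj : ∀ a x y, ip (φ a x) y = ip x (φ (star a) y)
  /-- non-degeneracy of the left action -/
  nondeg : closure (Submodule.span ℂ {z | ∃ a x, z = φ a x} : Set X) = Set.univ

attribute [instance] Corr.grp Corr.nsc Corr.cpl

variable {A B C : Type} [NonUnitalCStarAlgebra A] [NonUnitalCStarAlgebra B]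
  [NonUnitalCStarAlgebra C]

/-- `Z.setR I` is the closed submodule `Z·I` of `Z`. -/
def Corr.setR (Z : Corr A B) (I : Set B) : Set Z.X :=
  closure (Submodule.span ℂ {x | ∃ ξ b, b ∈ I ∧ x = Z.sm ξ b} : Set Z.X)

/-- `Z.setL I` is the closed subspace `I·Z` of `Z`. -/
def Corr.setL (Z : Corr A B) (I : Set A) : Set Z.X :=
  closure (Submodule.span ℂ {x | ∃ a ξ, a ∈ I ∧ x = Z.φ a ξ} : Set Z.X)

/-- `Z⁻¹(I) = {a ∈ A : φ_Z(a)Z ⊆ ZI}`. -/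
def Corr.inv (Z : Corr A B) (I : Set B) : Set A := {a | ∀ ξ, Z.φ a ξ ∈ Z.setR I}

/-- The closed ideal of `B` generated by the inner products of `Z`. -/
def Corr.ipSet (Z : Corr A B) : Set B :=
  closure (Submodule.span ℂ {b | ∃ x y, b = Z.ip x y} : Set B)

/-- A generalized compact operator on the underlying Hilbert module of a correspondence:
one that is approximable in operator norm by finite sums of "rank one" operators
`θ_{ξ,η} : z ↦ ξ·⟨η,z⟩`. -/
def Corr.IsCompactOp (Z : Corr A B) (f : Z.X → Z.X) : Prop :=
  ∀ ε > (0 : ℝ), ∃ (n : ℕ) (ξ η : Fin n → Z.X),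
    ∀ z, ‖f z - ∑ i, Z.sm (ξ i) (Z.ip (η i) z)‖ ≤ ε * ‖z‖

/-- A closed (two-sided, automatically self-adjoint) ideal of a C*-algebra, as a set. -/
structure IsCIdeal {B : Type} [NonUnitalCStarAlgebra B] (I : Set B) : Prop where
  isClosed : IsClosed I
  zero_mem : (0 : B) ∈ I
  add_mem : ∀ x y, x ∈ I → y ∈ I → x + y ∈ I
  smul_mem : ∀ (t : ℂ) x, x ∈ I → t • x ∈ I
  mul_left_mem : ∀ b x, x ∈ I → b * x ∈ I
  mul_right_mem : ∀ b x, x ∈ I → x * b ∈ I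

/-- `t : Z₁ × Z₂ → T` exhibits `T` as the interior tensor product `Z₁ ⊗_B Z₂`. -/
structure IsTensor (Z₁ : Corr A B) (Z₂ : Corr B C) (T : Corr A C)
    (t : Z₁.X → Z₂.X → T.X) : Prop where
  add_left : ∀ x x' y, t (x + x') y = t x y + t x' y
  add_right : ∀ x y y', t x (y + y') = t x y + t x y'
  smul_left : ∀ (c : ℂ) x y, t (c • x) y = c • t x y
  balanced : ∀ x b y, t (Z₁.sm x b) y = t x (Z₂.φ b y)
  sm_right : ∀ x y c, t x (Z₂.sm y c) = T.sm (t x y) c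
  act_left : ∀ a x y, T.φ a (t x y) = t (Z₁.φ a x) y
  inner : ∀ x x' y y', T.ip (t x y) (t x' y') = Z₂.ip y (Z₂.φ (Z₁.ip x x') y')
  dense : closure (Submodule.span ℂ {z | ∃ x y, z = t x y} : Set T.X) = Set.univ

/-- `X ≅ Z₁ ⊗ Z₂` (unitary isomorphism with the interior tensor product). -/
def IsTensorProd (Z₁ : Corr A B) (Z₂ : Corr B C) (T : Corr A C) : Prop :=
  ∃ t, IsTensor Z₁ Z₂ T t

/-- A unitary isomorphism of A–B correspondences. -/
def CorrIso (Z W : Corr A B) : Prop :=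
  ∃ u : Z.X → W.X, Function.Surjective u ∧ (∀ x y, u (x + y) = u x + u y) ∧
    (∀ (c : ℂ) x, u (c • x) = c • u x) ∧ (∀ a x, u (Z.φ a x) = W.φ a (u x)) ∧
    (∀ x b, u (Z.sm x b) = W.sm (u x) b) ∧ (∀ x y, W.ip (u x) (u y) = Z.ip x y)

end

noncomputable section

variable {A A' B B' : Type} [NonUnitalCStarAlgebra A] [NonUnitalCStarAlgebra A']
  [NonUnitalCStarAlgebra B] [NonUnitalCStarAlgebra B']

/-- `π : B → B'` realizes `B'` as the quotient C*-algebra `B/I`. -/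
structure IsQuotAlg (π : B → B') (I : Set B) : Prop where
  surj : Function.Surjective π
  map_add : ∀ a b, π (a + b) = π a + π b
  map_mul : ∀ a b, π (a * b) = π a * π b
  map_star : ∀ a, π (star a) = star (π a)
  map_smul : ∀ (t : ℂ) a, π (t • a) = t • π a
  ker : ∀ a, π a = 0 ↔ a ∈ I

/-- `q : Z → Q` realizes the `A'–B'` correspondence `Q` as the quotient correspondence
`Z_J = Z/ZJ` (where `πA : A → A'` and `πB : B → B'` realize `A/I` and `B/J`). -/
structure IsQuotCorr (Z : Corr A B) (Q : Corr A' B') (πA : A → A') (πB : B → B')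
    (J : Set B) (q : Z.X → Q.X) : Prop where
  surj : Function.Surjective q
  map_add : ∀ ξ η, q (ξ + η) = q ξ + q η
  map_smul : ∀ (t : ℂ) ξ, q (t • ξ) = t • q ξ
  ker : ∀ ξ, q ξ = 0 ↔ ξ ∈ Z.setR J
  ip : ∀ ξ η, Q.ip (q ξ) (q η) = πB (Z.ip ξ η)
  sm : ∀ ξ b, Q.sm (q ξ) (πB b) = q (Z.sm ξ b)
  act : ∀ a ξ, Q.φ (πA a) (q ξ) = q (Z.φ a ξ)


/-! ### Auxiliary development -/

namespace Corr

variable {A B C : Type} [NonUnitalCStarAlgebra A] [NonUnitalCStarAlgebra B]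
  [NonUnitalCStarAlgebra C] (Z : Corr A B)

lemma ip_zero_right (x : Z.X) : Z.ip x 0 = 0 := by
  have h := Z.ip_smul 0 x 0; simpa using h

lemma ip_zero_left (x : Z.X) : Z.ip 0 x = 0 := by
  rw [← Z.ip_star, ip_zero_right, star_zero]

lemma ip_smul_left (c : ℂ) (x y : Z.X) : Z.ip (c • x) y = star c • Z.ip x y := by
  rw [← Z.ip_star, Z.ip_smul, star_smul, Z.ip_star]

lemma ip_add_left (x y z : Z.X) : Z.ip (x + y) z = Z.ip x z + Z.ip y z := by
  rw [← Z.ip_star, Z.ip_add, star_add, Z.ip_star, Z.ip_star]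

lemma ip_neg_right (x y : Z.X) : Z.ip x (-y) = - Z.ip x y := by
  have h := Z.ip_smul (-1) x y; simpa using h

lemma ip_neg_left (x y : Z.X) : Z.ip (-x) y = - Z.ip x y := by
  rw [← Z.ip_star, ip_neg_right, star_neg, Z.ip_star]

lemma ip_sub_right (x y z : Z.X) : Z.ip x (y - z) = Z.ip x y - Z.ip x z := by
  rw [sub_eq_add_neg, Z.ip_add, ip_neg_right, sub_eq_add_neg]

lemma ip_sub_left (x y z : Z.X) : Z.ip (x - y) z = Z.ip x z - Z.ip y z := by
  rw [sub_eq_add_neg, ip_add_left, ip_neg_left, sub_eq_add_neg]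

lemma φ_neg (a : A) (x : Z.X) : Z.φ (-a) x = - Z.φ a x := by
  have h := Z.φ_smul' (-1) a x; simpa using h

lemma eq_zero_of_ip_self {x : Z.X} (h : Z.ip x x = 0) : x = 0 := by
  have h2 := Z.ip_norm x
  rw [h, norm_zero, pow_eq_zero_iff (two_ne_zero)] at h2
  exact norm_eq_zero.mp h2

/-- The inner product `Z.ip z z`, viewed in the unitization, is nonnegative
(with respect to the spectral order). -/
lemma inr_ip_self_nonneg [PartialOrder (Unitization ℂ B)]
    [StarOrderedRing (Unitization ℂ B)] (z : Z.X) :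
    (0 : Unitization ℂ B) ≤ ((Z.ip z z : B) : Unitization ℂ B) := by
  obtain ⟨g, hg⟩ := Z.ip_pos z
  rw [hg, Unitization.inr_mul, Unitization.inr_star]
  exact star_mul_self_nonneg _

/-- Cauchy–Schwarz for C*-correspondences. -/
lemma norm_ip_le (x y : Z.X) : ‖Z.ip x y‖ ≤ ‖x‖ * ‖y‖ := by
  rcases eq_or_ne x 0 with rfl | hx
  · simp [Z.ip_zero_left]
  letI : PartialOrder (Unitization ℂ B) := CStarAlgebra.spectralOrder _
  letI : StarOrderedRing (Unitization ℂ B) := CStarAlgebra.spectralOrderedRing _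
  set a := Z.ip x y with ha
  set n := ‖Z.ip x x‖ with hn
  have hxx0 : Z.ip x x ≠ 0 := fun h => hx (Z.eq_zero_of_ip_self h)
  have hn0 : 0 < n := norm_pos_iff.mpr hxx0
  set v := Z.sm x a - (n : ℂ) • y with hv
  have h1 : Z.ip (Z.sm x a) x = star a * Z.ip x x := by
    rw [← Z.ip_star x (Z.sm x a), Z.ip_sm, star_mul, Z.ip_star, Z.ip_star x x]
  have h2 : Z.ip (Z.sm x a) y = star a * a := by
    rw [← Z.ip_star y (Z.sm x a), Z.ip_sm, star_mul, Z.ip_star y x, ← ha]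
  have h3 : Z.ip y x = star a := by rw [← Z.ip_star x y, ← ha]
  have hipv : Z.ip v v =
      (star a * Z.ip x x * a - (n : ℂ) • (star a * a)) -
        ((n : ℂ) • (star a * a) - (n : ℂ) • ((n : ℂ) • Z.ip y y)) := by
    rw [hv, Z.ip_sub_left, Z.ip_sub_right, Z.ip_sub_right, Z.ip_sm, h1, Z.ip_smul,
      h2, Z.ip_smul_left, Z.ip_sm, h3, Z.ip_smul_left, Z.ip_smul]
    simp [Complex.star_def, Complex.conj_ofReal]
  -- move to the unitization
  have hxxsa : IsSelfAdjoint ((Z.ip x x : B) : Unitization ℂ B) := by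
    rw [IsSelfAdjoint, ← Unitization.inr_star, Z.ip_star]
  have hconj : star ((a : Unitization ℂ B)) * ((Z.ip x x : B) : Unitization ℂ B) *
      (a : Unitization ℂ B) ≤ n • (star ((a : Unitization ℂ B)) * (a : Unitization ℂ B)) := by
    have h := CStarAlgebra.star_left_conjugate_le_norm_smul
      (a := (a : Unitization ℂ B)) (b := ((Z.ip x x : B) : Unitization ℂ B)) hxxsa
    rwa [Unitization.norm_inr] at h
  have h0 : (0 : Unitization ℂ B) ≤ ((Z.ip v v : B) : Unitization ℂ B) :=
    Z.inr_ip_self_nonneg v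
  have hexp : ((Z.ip v v : B) : Unitization ℂ B) =
      (star ((a : Unitization ℂ B)) * ((Z.ip x x : B) : Unitization ℂ B) * (a : Unitization ℂ B)
        - n • (star ((a : Unitization ℂ B)) * (a : Unitization ℂ B))) -
      (n • (star ((a : Unitization ℂ B)) * (a : Unitization ℂ B))
        - n • (n • ((Z.ip y y : B) : Unitization ℂ B))) := by
    rw [hipv]
    simp only [sub_eq_add_neg, Unitization.inr_add, Unitization.inr_neg, Unitization.inr_mul,
      Unitization.inr_smul, Unitization.inr_star, Complex.coe_smul]
  have hkey : n • (star ((a : Unitization ℂ B)) * (a : Unitization ℂ B)) ≤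
      n • (n • ((Z.ip y y : B) : Unitization ℂ B)) := by
    rw [← sub_nonneg]
    calc (0 : Unitization ℂ B) ≤ ((Z.ip v v : B) : Unitization ℂ B) := h0
      _ ≤ (n • (star ((a : Unitization ℂ B)) * (a : Unitization ℂ B))
            - n • (star ((a : Unitization ℂ B)) * (a : Unitization ℂ B))) -
          (n • (star ((a : Unitization ℂ B)) * (a : Unitization ℂ B))
            - n • (n • ((Z.ip y y : B) : Unitization ℂ B))) := by
          rw [hexp]; exact sub_le_sub_right (sub_le_sub_right hconj _) _
      _ = n • (n • ((Z.ip y y : B) : Unitization ℂ B))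
            - n • (star ((a : Unitization ℂ B)) * (a : Unitization ℂ B)) := by abel
  have hnE : (0 : Unitization ℂ B) ≤ n • (star ((a : Unitization ℂ B)) * (a : Unitization ℂ B)) :=
    smul_nonneg hn0.le (star_mul_self_nonneg _)
  have hnorm := CStarAlgebra.norm_le_norm_of_nonneg_of_le hnE hkey
  rw [norm_smul, norm_smul, norm_smul, CStarRing.norm_star_mul_self, Unitization.norm_inr,
    Unitization.norm_inr, Real.norm_eq_abs, abs_of_pos hn0] at hnorm
  have hsq : ‖a‖ * ‖a‖ ≤ (‖x‖ * ‖y‖) * (‖x‖ * ‖y‖) := by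
    have hx2 : ‖x‖ ^ 2 = n := Z.ip_norm x
    have hy2 : ‖y‖ ^ 2 = ‖Z.ip y y‖ := Z.ip_norm y
    have := (mul_le_mul_iff_right₀ hn0).mp hnorm
    nlinarith [this, sq_nonneg (‖x‖*‖y‖)]
  calc ‖a‖ = Real.sqrt (‖a‖ * ‖a‖) := (Real.sqrt_mul_self (norm_nonneg a)).symm
    _ ≤ Real.sqrt ((‖x‖ * ‖y‖) * (‖x‖ * ‖y‖)) := Real.sqrt_le_sqrt hsq
    _ = ‖x‖ * ‖y‖ := Real.sqrt_mul_self (by positivity)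

end Corr

namespace Corr

variable {A B : Type} [NonUnitalCStarAlgebra A] [NonUnitalCStarAlgebra B] (Z : Corr A B)

/-- The left action of a C*-correspondence is contractive. -/
lemma norm_phi_le (a : A) (ξ : Z.X) : ‖Z.φ a ξ‖ ≤ ‖a‖ * ‖ξ‖ := by
  letI : PartialOrder (Unitization ℂ A) := CStarAlgebra.spectralOrder _
  letI : StarOrderedRing (Unitization ℂ A) := CStarAlgebra.spectralOrderedRing _
  letI : PartialOrder (Unitization ℂ B) := CStarAlgebra.spectralOrder _
  letI : StarOrderedRing (Unitization ℂ B) := CStarAlgebra.spectralOrderedRing _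
  set c : A := star a * a with hc
  have hcsa : IsSelfAdjoint ((c : A) : Unitization ℂ A) := by
    rw [IsSelfAdjoint, ← Unitization.inr_star]
    simp [hc, star_mul]
  have hd0 : (0 : Unitization ℂ A) ≤ algebraMap ℝ (Unitization ℂ A) ‖c‖ - (c : Unitization ℂ A) := by
    rw [sub_nonneg]
    simpa [Unitization.norm_inr] using hcsa.le_algebraMap_norm_self
  set e : Unitization ℂ A := CFC.sqrt (algebraMap ℝ (Unitization ℂ A) ‖c‖ - (c : Unitization ℂ A))
    with he
  have he0 : 0 ≤ e := CFC.sqrt_nonneg _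
  have hesa : IsSelfAdjoint e := IsSelfAdjoint.of_nonneg he0
  have hee : e * e = algebraMap ℝ (Unitization ℂ A) ‖c‖ - (c : Unitization ℂ A) := by
    have h := CFC.sq_sqrt _ hd0
    rw [pow_two] at h
    exact h
  set α : ℂ := e.fst with hα
  set f : A := e.snd with hf
  have hαr : star α = α := by
    have h := congrArg (fun u : Unitization ℂ A => u.fst) hesa
    simpa using h
  have hfsa : star f = f := by
    have h := congrArg (fun u : Unitization ℂ A => u.snd) hesa
    simpa using h
  have hfst : α * α = (‖c‖ : ℂ) := by
    have h := congrArg (fun u : Unitization ℂ A => u.fst) hee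
    simpa [Unitization.fst_mul, Algebra.algebraMap_eq_smul_one, sub_eq_add_neg,
      Unitization.fst_add, Unitization.fst_neg, Unitization.fst_smul, Unitization.fst_one,
      Unitization.fst_inr, Complex.real_smul] using h
  have hsnd : α • f + α • f + f * f = -c := by
    have h := congrArg (fun u : Unitization ℂ A => u.snd) hee
    simpa [Unitization.snd_mul, Algebra.algebraMap_eq_smul_one, sub_eq_add_neg,
      Unitization.snd_add, Unitization.snd_neg, Unitization.snd_smul, Unitization.snd_one,
      Unitization.snd_inr] using h
  -- the inner-product identity
  have hipid : Z.ip (Z.φ a ξ) (Z.φ a ξ) = Z.ip ξ (Z.φ c ξ) := by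
    rw [Z.φ_adj, ← Z.φ_mul]
  have hφc : Z.φ c ξ = -(α • Z.φ f ξ + α • Z.φ f ξ + Z.φ (f * f) ξ) := by
    have hcc : c = -(α • f + α • f + f * f) := by rw [hsnd, neg_neg]
    rw [hcc, Z.φ_neg, Z.φ_add', Z.φ_add', Z.φ_smul']
  set w : Z.X := Z.φ f ξ with hw
  have hwξ : Z.ip w ξ = Z.ip ξ w := by
    rw [hw, Z.φ_adj, hfsa]
  have hww : Z.ip w w = Z.ip ξ (Z.φ (f * f) ξ) := by
    rw [hw, Z.φ_adj, hfsa, Z.φ_mul]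
  have hkeyB : (‖c‖ : ℂ) • Z.ip ξ ξ - Z.ip ξ (Z.φ c ξ) = Z.ip (α • ξ + w) (α • ξ + w) := by
    simp only [Z.ip_add_left, Z.ip_add, Z.ip_smul_left, Z.ip_smul, hαr, hφc, Z.ip_neg_right,
      hwξ, hww, ← hfst, mul_smul, sub_neg_eq_add]
    abel
  -- move to the unitization of B
  have h0 : (0 : Unitization ℂ B) ≤ ((Z.ip (α • ξ + w) (α • ξ + w) : B) : Unitization ℂ B) :=
    Z.inr_ip_self_nonneg _
  have hle : ((Z.ip ξ (Z.φ c ξ) : B) : Unitization ℂ B) ≤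
      ‖c‖ • ((Z.ip ξ ξ : B) : Unitization ℂ B) := by
    rw [← sub_nonneg]
    have h2 := congrArg (fun b : B => ((b : Unitization ℂ B))) hkeyB
    simp only [sub_eq_add_neg, Unitization.inr_add, Unitization.inr_neg,
      Unitization.inr_smul, Complex.coe_smul] at h2
    rw [← sub_eq_add_neg] at h2
    rw [h2]
    exact h0
  have hposl : (0 : Unitization ℂ B) ≤ ((Z.ip (Z.φ a ξ) (Z.φ a ξ) : B) : Unitization ℂ B) :=
    Z.inr_ip_self_nonneg _
  have hle2 : ((Z.ip (Z.φ a ξ) (Z.φ a ξ) : B) : Unitization ℂ B) ≤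
      ‖c‖ • ((Z.ip ξ ξ : B) : Unitization ℂ B) := by rw [hipid]; exact hle
  have hnorm := CStarAlgebra.norm_le_norm_of_nonneg_of_le hposl hle2
  rw [norm_smul, Unitization.norm_inr, Unitization.norm_inr, Real.norm_eq_abs,
    abs_of_nonneg (norm_nonneg _)] at hnorm
  have hfin : ‖Z.φ a ξ‖ ^ 2 ≤ (‖a‖ * ‖ξ‖) ^ 2 := by
    rw [← Z.ip_norm, ← Z.ip_norm] at hnorm
    have hc2 : ‖c‖ = ‖a‖ * ‖a‖ := CStarRing.norm_star_mul_self
    have hξ2 : ‖ξ‖ ^ 2 = ‖Z.ip ξ ξ‖ := Z.ip_norm ξ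
    nlinarith [hnorm, norm_nonneg a, norm_nonneg ξ]
  calc ‖Z.φ a ξ‖ = Real.sqrt (‖Z.φ a ξ‖ ^ 2) := (Real.sqrt_sq (norm_nonneg _)).symm
    _ ≤ Real.sqrt ((‖a‖ * ‖ξ‖) ^ 2) := Real.sqrt_le_sqrt hfin
    _ = ‖a‖ * ‖ξ‖ := Real.sqrt_sq (by positivity)

end Corr

namespace IsTensor

variable {A B C : Type} [NonUnitalCStarAlgebra A] [NonUnitalCStarAlgebra B]
  [NonUnitalCStarAlgebra C] {Z₁ : Corr A B} {Z₂ : Corr B C} {T : Corr A C}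
  {t : Z₁.X → Z₂.X → T.X}

lemma zero_left (ht : IsTensor Z₁ Z₂ T t) (y : Z₂.X) : t 0 y = 0 := by
  have h := ht.add_left 0 0 y
  rw [add_zero] at h
  have h2 : t 0 y + 0 = t 0 y + t 0 y := by rw [add_zero]; exact h
  exact (add_left_cancel h2).symm

lemma zero_right (ht : IsTensor Z₁ Z₂ T t) (x : Z₁.X) : t x 0 = 0 := by
  have h := ht.add_right x 0 0
  rw [add_zero] at h
  have h2 : t x 0 + 0 = t x 0 + t x 0 := by rw [add_zero]; exact h
  exact (add_left_cancel h2).symm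

lemma neg_right (ht : IsTensor Z₁ Z₂ T t) (x : Z₁.X) (y : Z₂.X) : t x (-y) = - t x y := by
  have h := ht.add_right x y (-y)
  rw [add_neg_cancel, ht.zero_right] at h
  exact (neg_eq_of_add_eq_zero_right h.symm).symm

lemma sub_right (ht : IsTensor Z₁ Z₂ T t) (x : Z₁.X) (y y' : Z₂.X) :
    t x (y - y') = t x y - t x y' := by
  rw [sub_eq_add_neg, ht.add_right, ht.neg_right, sub_eq_add_neg]

lemma neg_left (ht : IsTensor Z₁ Z₂ T t) (x : Z₁.X) (y : Z₂.X) : t (-x) y = - t x y := by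
  have h := ht.smul_left (-1) x y
  simpa using h

lemma sub_left (ht : IsTensor Z₁ Z₂ T t) (x x' : Z₁.X) (y : Z₂.X) :
    t (x - x') y = t x y - t x' y := by
  rw [sub_eq_add_neg, ht.add_left, ht.neg_left, sub_eq_add_neg]

lemma smul_right (ht : IsTensor Z₁ Z₂ T t) (c : ℂ) (x : Z₁.X) (y : Z₂.X) :
    t x (c • y) = c • t x y := by
  have hz : T.ip (t x (c • y) - c • t x y) (t x (c • y) - c • t x y) = 0 := by
    simp only [T.ip_sub_left, T.ip_sub_right, T.ip_smul, T.ip_smul_left, ht.inner,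
      Z₂.φ_smul, Z₂.ip_smul, Z₂.ip_smul_left, smul_smul]
    rw [mul_comm (star c) c]
    abel
  have h := T.eq_zero_of_ip_self hz
  rw [sub_eq_zero] at h
  exact h

lemma norm_le (ht : IsTensor Z₁ Z₂ T t) (x : Z₁.X) (y : Z₂.X) : ‖t x y‖ ≤ ‖x‖ * ‖y‖ := by
  have h1 : ‖t x y‖ ^ 2 = ‖Z₂.ip y (Z₂.φ (Z₁.ip x x) y)‖ := by
    rw [T.ip_norm, ht.inner]
  have h2 : ‖Z₂.ip y (Z₂.φ (Z₁.ip x x) y)‖ ≤ ‖y‖ * (‖Z₁.ip x x‖ * ‖y‖) :=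
    le_trans (Z₂.norm_ip_le _ _) (by
      have := Z₂.norm_phi_le (Z₁.ip x x) y
      exact mul_le_mul_of_nonneg_left this (norm_nonneg y))
  have h3 : ‖t x y‖ ^ 2 ≤ (‖x‖ * ‖y‖) ^ 2 := by
    have hx2 : ‖Z₁.ip x x‖ = ‖x‖ ^ 2 := (Z₁.ip_norm x).symm
    rw [hx2] at h2
    rw [h1]
    calc ‖Z₂.ip y (Z₂.φ (Z₁.ip x x) y)‖ ≤ ‖y‖ * (‖x‖ ^ 2 * ‖y‖) := h2
      _ = (‖x‖ * ‖y‖) ^ 2 := by ring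
  calc ‖t x y‖ = Real.sqrt (‖t x y‖ ^ 2) := (Real.sqrt_sq (norm_nonneg _)).symm
    _ ≤ Real.sqrt ((‖x‖ * ‖y‖) ^ 2) := Real.sqrt_le_sqrt h3
    _ = ‖x‖ * ‖y‖ := Real.sqrt_sq (by positivity)

end IsTensor

namespace IsQuotAlg

variable {B B' : Type} [NonUnitalCStarAlgebra B] [NonUnitalCStarAlgebra B']
  {π : B → B'} {I : Set B}

lemma map_zero (hπ : IsQuotAlg π I) : π 0 = 0 := by
  have h := hπ.map_smul 0 0
  simpa using h

lemma norm_le (hπ : IsQuotAlg π I) (b : B) : ‖π b‖ ≤ ‖b‖ := by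
  let Φ : B →⋆ₙₐ[ℂ] B' :=
    { toFun := π
      map_smul' := hπ.map_smul
      map_zero' := hπ.map_zero
      map_add' := hπ.map_add
      map_mul' := hπ.map_mul
      map_star' := hπ.map_star }
  exact NonUnitalStarAlgHom.norm_apply_le Φ b

end IsQuotAlg

namespace IsQuotCorr

variable {A A' B B' : Type} [NonUnitalCStarAlgebra A] [NonUnitalCStarAlgebra A']
  [NonUnitalCStarAlgebra B] [NonUnitalCStarAlgebra B']
  {Z : Corr A B} {Q : Corr A' B'} {πA : A → A'} {πB : B → B'} {J : Set B} {q : Z.X → Q.X}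

lemma map_zero (hq : IsQuotCorr Z Q πA πB J q) : q 0 = 0 := by
  have h := hq.map_smul 0 0
  simpa using h

lemma map_neg (hq : IsQuotCorr Z Q πA πB J q) (ξ : Z.X) : q (-ξ) = - q ξ := by
  have h := hq.map_smul (-1) ξ
  simpa using h

lemma map_sub (hq : IsQuotCorr Z Q πA πB J q) (ξ η : Z.X) : q (ξ - η) = q ξ - q η := by
  rw [sub_eq_add_neg, hq.map_add, hq.map_neg, sub_eq_add_neg]

lemma norm_le (hq : IsQuotCorr Z Q πA πB J q) (hπB : IsQuotAlg πB J) (ξ : Z.X) :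
    ‖q ξ‖ ≤ ‖ξ‖ := by
  have h1 : ‖q ξ‖ ^ 2 = ‖πB (Z.ip ξ ξ)‖ := by rw [Q.ip_norm, hq.ip]
  have h2 : ‖πB (Z.ip ξ ξ)‖ ≤ ‖ξ‖ ^ 2 := by
    rw [Z.ip_norm]
    exact hπB.norm_le _
  calc ‖q ξ‖ = Real.sqrt (‖q ξ‖ ^ 2) := (Real.sqrt_sq (norm_nonneg _)).symm
    _ ≤ Real.sqrt (‖ξ‖ ^ 2) := Real.sqrt_le_sqrt (h1 ▸ h2)
    _ = ‖ξ‖ := Real.sqrt_sq (norm_nonneg _)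

/-- The quotient map, as a continuous linear map. -/
def clm (hq : IsQuotCorr Z Q πA πB J q) (hπB : IsQuotAlg πB J) : Z.X →L[ℂ] Q.X :=
  LinearMap.mkContinuous
    { toFun := q
      map_add' := hq.map_add
      map_smul' := hq.map_smul } 1
    (fun ξ => by simpa using hq.norm_le hπB ξ)

@[simp] lemma clm_apply (hq : IsQuotCorr Z Q πA πB J q) (hπB : IsQuotAlg πB J) (ξ : Z.X) :
    hq.clm hπB ξ = q ξ := rfl

end IsQuotCorr

/-- The quotient of an interior tensor product is the interior tensor product of
the quotients, provided the left action of the middle ideal maps into the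
appropriate submodule. -/
theorem quot_tensor
    {A B C A' B' C' : Type} [NonUnitalCStarAlgebra A] [NonUnitalCStarAlgebra B]
    [NonUnitalCStarAlgebra C] [NonUnitalCStarAlgebra A'] [NonUnitalCStarAlgebra B']
    [NonUnitalCStarAlgebra C']
    {Z₁ : Corr A B} {Z₂ : Corr B C} {T : Corr A C}
    {t : Z₁.X → Z₂.X → T.X} (ht : IsTensor Z₁ Z₂ T t)
    {IA : Set A} {JB : Set B} {JC : Set C}
    {πA : A → A'} (hπA : IsQuotAlg πA IA) {πB : B → B'} (hπB : IsQuotAlg πB JB)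
    {πC : C → C'} (hπC : IsQuotAlg πC JC)
    {Q₁ : Corr A' B'} {q₁ : Z₁.X → Q₁.X} (hq₁ : IsQuotCorr Z₁ Q₁ πA πB JB q₁)
    {Q₂ : Corr B' C'} {q₂ : Z₂.X → Q₂.X} (hq₂ : IsQuotCorr Z₂ Q₂ πB πC JC q₂)
    {TQ : Corr A' C'} {qT : T.X → TQ.X} (hqT : IsQuotCorr T TQ πA πC JC qT)
    (hinv : ∀ b ∈ JB, ∀ y, Z₂.φ b y ∈ Z₂.setR JC) :
    IsTensorProd Q₁ Q₂ TQ := by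
  classical
  have step2 : ∀ (r : Z₁.X) (s : Z₂.X), s ∈ Z₂.setR JC → qT (t r s) = 0 := by
    intro r
    let L : Z₂.X →ₗ[ℂ] TQ.X :=
      { toFun := fun s => qT (t r s)
        map_add' := fun s s' => by
          show qT (t r (s + s')) = qT (t r s) + qT (t r s')
          rw [ht.add_right, hqT.map_add]
        map_smul' := fun c s => by
          show qT (t r (c • s)) = (RingHom.id ℂ) c • qT (t r s)
          rw [ht.smul_right, hqT.map_smul]; rfl }
    let Lc : Z₂.X →L[ℂ] TQ.X := L.mkContinuous ‖r‖ (fun s => by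
      calc ‖L s‖ ≤ ‖t r s‖ := by simpa [L] using hqT.norm_le hπC (t r s)
        _ ≤ ‖r‖ * ‖s‖ := ht.norm_le r s)
    have hgen : {x : Z₂.X | ∃ ξ c, c ∈ JC ∧ x = Z₂.sm ξ c} ⊆ (LinearMap.ker L : Set Z₂.X) := by
      rintro x ⟨ξ, c, hc, rfl⟩
      have h0 : qT (t r (Z₂.sm ξ c)) = 0 := by
        rw [ht.sm_right, (hqT.ker _).mpr]
        exact subset_closure (Submodule.subset_span ⟨t r ξ, c, hc, rfl⟩)
      simpa [L, LinearMap.mem_ker] using h0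
    have hspan : (Submodule.span ℂ {x : Z₂.X | ∃ ξ c, c ∈ JC ∧ x = Z₂.sm ξ c} : Set Z₂.X)
        ⊆ (LinearMap.ker L : Set Z₂.X) := by
      exact_mod_cast Submodule.span_le.mpr hgen
    have hclosed : IsClosed (LinearMap.ker L : Set Z₂.X) := by
      have heq : (LinearMap.ker L : Set Z₂.X) = Lc ⁻¹' {0} := by
        ext s; simp [Lc, LinearMap.mem_ker, LinearMap.mkContinuous_apply]
      rw [heq]
      exact IsClosed.preimage Lc.continuous isClosed_singleton
    intro s hs
    have hmem : s ∈ (LinearMap.ker L : Set Z₂.X) := closure_minimal hspan hclosed hs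
    simpa [L, LinearMap.mem_ker] using hmem
  have step3 : ∀ (s : Z₂.X) (r : Z₁.X), r ∈ Z₁.setR JB → qT (t r s) = 0 := by
    intro s
    let L : Z₁.X →ₗ[ℂ] TQ.X :=
      { toFun := fun r => qT (t r s)
        map_add' := fun r r' => by
          show qT (t (r + r') s) = qT (t r s) + qT (t r' s)
          rw [ht.add_left, hqT.map_add]
        map_smul' := fun c r => by
          show qT (t (c • r) s) = (RingHom.id ℂ) c • qT (t r s)
          rw [ht.smul_left, hqT.map_smul]; rfl }
    let Lc : Z₁.X →L[ℂ] TQ.X := L.mkContinuous ‖s‖ (fun r => by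
      calc ‖L r‖ ≤ ‖t r s‖ := by simpa [L] using hqT.norm_le hπC (t r s)
        _ ≤ ‖r‖ * ‖s‖ := ht.norm_le r s
        _ = ‖s‖ * ‖r‖ := mul_comm _ _)
    have hgen : {x : Z₁.X | ∃ ξ b, b ∈ JB ∧ x = Z₁.sm ξ b} ⊆ (LinearMap.ker L : Set Z₁.X) := by
      rintro x ⟨ξ, b, hb, rfl⟩
      have h0 : qT (t (Z₁.sm ξ b) s) = 0 := by
        rw [ht.balanced]
        exact step2 ξ _ (hinv b hb s)
      simpa [L, LinearMap.mem_ker] using h0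
    have hspan : (Submodule.span ℂ {x : Z₁.X | ∃ ξ b, b ∈ JB ∧ x = Z₁.sm ξ b} : Set Z₁.X)
        ⊆ (LinearMap.ker L : Set Z₁.X) := by
      exact_mod_cast Submodule.span_le.mpr hgen
    have hclosed : IsClosed (LinearMap.ker L : Set Z₁.X) := by
      have heq : (LinearMap.ker L : Set Z₁.X) = Lc ⁻¹' {0} := by
        ext r; simp [Lc, LinearMap.mem_ker, LinearMap.mkContinuous_apply]
      rw [heq]
      exact IsClosed.preimage Lc.continuous isClosed_singleton
    intro r hr
    have hmem : r ∈ (LinearMap.ker L : Set Z₁.X) := closure_minimal hspan hclosed hr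
    simpa [L, LinearMap.mem_ker] using hmem
  have wd : ∀ r r' s s', q₁ r = q₁ r' → q₂ s = q₂ s' → qT (t r s) = qT (t r' s') := by
    intro r r' s s' h1 h2
    have hr : r - r' ∈ Z₁.setR JB := (hq₁.ker _).mp (by rw [hq₁.map_sub, h1, sub_self])
    have hs : s - s' ∈ Z₂.setR JC := (hq₂.ker _).mp (by rw [hq₂.map_sub, h2, sub_self])
    have hdecomp : t r s = t r' s' + (t (r - r') s + t r' (s - s')) := by
      rw [ht.sub_left, ht.sub_right]; abel
    rw [hdecomp, hqT.map_add, hqT.map_add, step3 s _ hr, step2 r' _ hs, add_zero, add_zero]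
  choose σ₁ hσ₁ using hq₁.surj
  choose σ₂ hσ₂ using hq₂.surj
  have key : ∀ r s, qT (t (σ₁ (q₁ r)) (σ₂ (q₂ s))) = qT (t r s) := fun r s =>
    wd _ _ _ _ (hσ₁ _) (hσ₂ _)
  refine ⟨fun ξ η => qT (t (σ₁ ξ) (σ₂ η)), ?_, ?_, ?_, ?_, ?_, ?_, ?_, ?_⟩
  · -- add_left
    intro ξ ξ' η
    obtain ⟨r, rfl⟩ := hq₁.surj ξ
    obtain ⟨r', rfl⟩ := hq₁.surj ξ'
    obtain ⟨s, rfl⟩ := hq₂.surj η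
    rw [← hq₁.map_add, key, key, key, ← hqT.map_add, ht.add_left]
  · -- add_right
    intro ξ η η'
    obtain ⟨r, rfl⟩ := hq₁.surj ξ
    obtain ⟨s, rfl⟩ := hq₂.surj η
    obtain ⟨s', rfl⟩ := hq₂.surj η'
    rw [← hq₂.map_add, key, key, key, ← hqT.map_add, ht.add_right]
  · -- smul_left
    intro c ξ η
    obtain ⟨r, rfl⟩ := hq₁.surj ξ
    obtain ⟨s, rfl⟩ := hq₂.surj η
    rw [← hq₁.map_smul, key, key, ← hqT.map_smul, ht.smul_left]
  · -- balanced
    intro ξ b' η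
    obtain ⟨r, rfl⟩ := hq₁.surj ξ
    obtain ⟨s, rfl⟩ := hq₂.surj η
    obtain ⟨b, rfl⟩ := hπB.surj b'
    rw [hq₁.sm, hq₂.act, key, key, ht.balanced]
  · -- sm_right
    intro ξ η c'
    obtain ⟨r, rfl⟩ := hq₁.surj ξ
    obtain ⟨s, rfl⟩ := hq₂.surj η
    obtain ⟨c, rfl⟩ := hπC.surj c'
    rw [hq₂.sm, key, key, ht.sm_right, ← hqT.sm]
  · -- act_left
    intro a' ξ η
    obtain ⟨r, rfl⟩ := hq₁.surj ξ
    obtain ⟨s, rfl⟩ := hq₂.surj η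
    obtain ⟨a, rfl⟩ := hπA.surj a'
    rw [hq₁.act, key, key, hqT.act, ht.act_left]
  · -- inner
    intro ξ ξ' η η'
    obtain ⟨r, rfl⟩ := hq₁.surj ξ
    obtain ⟨r', rfl⟩ := hq₁.surj ξ'
    obtain ⟨s, rfl⟩ := hq₂.surj η
    obtain ⟨s', rfl⟩ := hq₂.surj η'
    rw [key, key, hqT.ip, ht.inner, hq₁.ip, hq₂.act, hq₂.ip]
  · -- dense
    have hD' : ∀ z ∈ Submodule.span ℂ {z : T.X | ∃ x y, z = t x y},
        qT z ∈ Submodule.span ℂ {w : TQ.X | ∃ ξ η, w = qT (t (σ₁ ξ) (σ₂ η))} := by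
      intro z hz
      induction hz using Submodule.span_induction with
      | mem z hzz =>
        obtain ⟨x, y, rfl⟩ := hzz
        exact Submodule.subset_span ⟨q₁ x, q₂ y, (key x y).symm⟩
      | zero => rw [hqT.map_zero]; exact Submodule.zero_mem _
      | add u v hu hv ihu ihv => rw [hqT.map_add]; exact Submodule.add_mem _ ihu ihv
      | smul c u hu ihu => rw [hqT.map_smul]; exact Submodule.smul_mem _ _ ihu
    apply Set.eq_univ_of_univ_subset
    intro w _
    obtain ⟨z, rfl⟩ := hqT.surj w
    have hz : z ∈ closure (Submodule.span ℂ {z : T.X | ∃ x y, z = t x y} : Set T.X) := by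
      rw [ht.dense]; trivial
    have hcont : Continuous qT := (hqT.clm hπC).continuous
    have h1 : qT z ∈ closure
        (qT '' (Submodule.span ℂ {z : T.X | ∃ x y, z = t x y} : Set T.X)) :=
      image_closure_subset_closure_image hcont ⟨z, hz, rfl⟩
    refine closure_mono ?_ h1
    rintro w' ⟨u, hu, rfl⟩
    exact hD' u hu

/-- if `X ≅ R ⊗_B S`, `S ⊗_A R ≅ Y`, `φ_R(I)R ⊆ RJ` and `φ_S(J)S ⊆ SI`,
then `X_I ≅ R_J ⊗_{B/J} S_I` and `S_I ⊗_{A/I} R_J ≅ Y_J`. -/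
theorem stmt10 (X : Corr A A) (Y : Corr B B) (R : Corr A B) (S : Corr B A)
    (I : Set A) (hI : IsCIdeal I) (J : Set B) (hJ : IsCIdeal J)
    (hX : IsTensorProd R S X) (hY : IsTensorProd S R Y)
    (hRinv : ∀ a ∈ I, ∀ r, R.φ a r ∈ R.setR J)
    (hSinv : ∀ b ∈ J, ∀ s, S.φ b s ∈ S.setR I)
    (πA : A → A') (hπA : IsQuotAlg πA I) (πB : B → B') (hπB : IsQuotAlg πB J)
    (XI : Corr A' A') (qX : X.X → XI.X) (hqX : IsQuotCorr X XI πA πA I qX)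
    (YJ : Corr B' B') (qY : Y.X → YJ.X) (hqY : IsQuotCorr Y YJ πB πB J qY)
    (RJ : Corr A' B') (qR : R.X → RJ.X) (hqR : IsQuotCorr R RJ πA πB J qR)
    (SI : Corr B' A') (qS : S.X → SI.X) (hqS : IsQuotCorr S SI πB πA I qS) :
    IsTensorProd RJ SI XI ∧ IsTensorProd SI RJ YJ := by
  obtain ⟨t, ht⟩ := hX
  obtain ⟨u, hu⟩ := hY
  exact ⟨quot_tensor ht hπA hπB hπA hqR hqS hqX hSinv,
    quot_tensor hu hπB hπA hπB hqS hqR hqY hRinv⟩
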